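/- For a prime $p$, a subset $A \subseteq \mathbb{F}_p$, and a subset $S \subseteq \mathbb{F}_p^*$, there exists $\xi \in S$ such that $|A + \xi A| \ge (1/p + p/(|S||A|^2))^{-1}$. -/

import Mathlib

open Finset Pointwise Complex
open scoped Combinatorics.Additive

namespace Stmt10Aux

variable {N : ℕ} [NeZero N]

/-- The exponential sum (Fourier transform of the indicator) of a finset of `ZMod N`. -/
noncomputable def F (B : Finset (ZMod N)) (t : ZMod N) : ℂ :=
  ∑ a ∈ B, ZMod.stdAddChar (a * t)

lemma orth (t : ZMod N) :
    ∑ i : ZMod N, ZMod.stdAddChar (t * i) = if t = 0 then (N : ℂ) else 0 := by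
  split_ifs with h
  · simp [h, ZMod.card]
  · exact AddChar.sum_eq_zero_of_ne_one (ZMod.isPrimitive_stdAddChar N h)

lemma F_mul_F_neg (B C : Finset (ZMod N)) (t : ZMod N) :
    F B t * F C (-t) = ∑ x ∈ B ×ˢ C, ZMod.stdAddChar ((x.1 - x.2) * t) := by
  rw [F, F, sum_mul_sum, Finset.sum_product]
  refine sum_congr rfl fun a _ => sum_congr rfl fun c _ => ?_
  rw [← AddChar.map_add_eq_mul]
  congr 1
  ring

lemma conj_F (B : Finset (ZMod N)) (t : ZMod N) :
    (starRingEnd ℂ) (F B t) = F B (-t) := by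
  rw [F, map_sum]
  refine sum_congr rfl fun a _ => ?_
  rw [mul_neg, AddChar.map_neg_eq_inv, ← Complex.inv_eq_conj]
  rw [ZMod.stdAddChar_apply, Circle.norm_coe]

lemma normSq_F (B : Finset (ZMod N)) (t : ZMod N) :
    ((Complex.normSq (F B t) : ℝ) : ℂ) = F B t * F B (-t) := by
  rw [← conj_F, Complex.mul_conj]

lemma parseval_c (B : Finset (ZMod N)) :
    ∑ t : ZMod N, F B t * F B (-t) = (N : ℂ) * B.card := by
  simp only [F_mul_F_neg]
  rw [Finset.sum_comm]
  have h1 : ∀ x ∈ B ×ˢ B, ∑ t : ZMod N, ZMod.stdAddChar ((x.1 - x.2 : ZMod N) * t)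
      = if x.1 = x.2 then (N : ℂ) else 0 := by
    intro x _
    rw [orth]
    simp [sub_eq_zero]
  rw [sum_congr rfl h1, sum_ite, sum_const, sum_const_zero, add_zero, ← Finset.diag_eq_filter,
    diag_card, nsmul_eq_mul, mul_comm]

lemma parseval_r (B : Finset (ZMod N)) :
    ∑ t : ZMod N, Complex.normSq (F B t) = (N : ℝ) * B.card := by
  have h := parseval_c B
  simp only [← normSq_F] at h
  have h4 : (∑ t : ZMod N, Complex.normSq (F B t)) = ((N * B.card : ℕ) : ℝ) := by
    exact_mod_cast h
  rw [h4]; push_cast; ring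

lemma energy_c (A B : Finset (ZMod N)) :
    ∑ t : ZMod N, (F A t * F B t) * (F A (-t) * F B (-t)) = (N : ℂ) * E[A, B] := by
  have h0 : ∀ t : ZMod N, (F A t * F B t) * (F A (-t) * F B (-t))
      = ∑ y ∈ (A ×ˢ A) ×ˢ (B ×ˢ B),
          ZMod.stdAddChar ((y.1.1 + y.2.1 - (y.1.2 + y.2.2)) * t) := by
    intro t
    have : (F A t * F B t) * (F A (-t) * F B (-t))
        = (F A t * F A (-t)) * (F B t * F B (-t)) := by ring
    rw [this, F_mul_F_neg, F_mul_F_neg,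
      Finset.sum_mul_sum (A ×ˢ A) (B ×ˢ B)
        (fun x => ZMod.stdAddChar ((x.1 - x.2) * t))
        (fun y => ZMod.stdAddChar ((y.1 - y.2) * t))]
    conv_rhs => rw [Finset.sum_product]
    refine sum_congr rfl fun x _ => sum_congr rfl fun y _ => ?_
    rw [← AddChar.map_add_eq_mul]
    congr 1
    ring
  simp only [h0]
  rw [Finset.sum_comm]
  have h1 : ∀ y ∈ (A ×ˢ A) ×ˢ (B ×ˢ B),
      ∑ t : ZMod N, ZMod.stdAddChar ((y.1.1 + y.2.1 - (y.1.2 + y.2.2) : ZMod N) * t)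
      = if y.1.1 + y.2.1 = y.1.2 + y.2.2 then (N : ℂ) else 0 := by
    intro y _
    rw [orth]
    simp [sub_eq_zero]
  rw [sum_congr rfl h1, sum_ite, sum_const, sum_const_zero, add_zero, nsmul_eq_mul, mul_comm]
  rfl

lemma energy_r (A B : Finset (ZMod N)) :
    (N : ℝ) * E[A, B] = ∑ t : ZMod N, Complex.normSq (F A t) * Complex.normSq (F B t) := by
  have h := energy_c A B
  have h2 : ∀ t : ZMod N, (F A t * F B t) * (F A (-t) * F B (-t))
      = ((Complex.normSq (F A t) * Complex.normSq (F B t) : ℝ) : ℂ) := by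
    intro t
    push_cast
    rw [normSq_F, normSq_F]
    ring
  simp only [h2] at h
  have h4 : (∑ t : ZMod N, Complex.normSq (F A t) * Complex.normSq (F B t))
      = ((N * E[A, B] : ℕ) : ℝ) := by exact_mod_cast h
  rw [h4]; push_cast; ring

end Stmt10Aux

open Stmt10Aux

theorem stmt10 (p : ℕ) (hp : p.Prime)
    (A : Finset (ZMod p)) (hA : A.Nonempty)
    (S : Finset (ZMod p)) (hS : S.Nonempty) (hS0 : ∀ ξ ∈ S, ξ ≠ 0) :
    ∃ ξ ∈ S, ((A + ξ • A).card : ℝ)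
      ≥ (1 / (p : ℝ) + (p : ℝ) / ((S.card : ℝ) * (A.card : ℝ) ^ 2))⁻¹ := by
  haveI : Fact p.Prime := ⟨hp⟩
  haveI : NeZero p := ⟨hp.ne_zero⟩
  set P : ℝ := (p : ℝ) with hP
  set K : ℝ := (A.card : ℝ) with hK
  set s : ℝ := (S.card : ℝ) with hs
  have hPpos : 0 < P := by rw [hP]; exact_mod_cast hp.pos
  have hKpos : 0 < K := by rw [hK]; exact_mod_cast hA.card_pos
  have hspos : 0 < s := by rw [hs]; exact_mod_cast hS.card_pos
  set n : ZMod p → ℝ := fun t => Complex.normSq (F A t) with hn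
  have hnn : ∀ t, 0 ≤ n t := fun t => Complex.normSq_nonneg _
  have hpar : ∑ t : ZMod p, n t = P * K := parseval_r A
  have hn0 : n 0 = K ^ 2 := by
    have hF0 : F A 0 = ((A.card : ℝ) : ℂ) := by
      push_cast
      simp [F]
    show Complex.normSq (F A 0) = K ^ 2
    rw [hF0, Complex.normSq_ofReal, hK]
    ring
  have hFsmul : ∀ ξ : ZMod p, ξ ≠ 0 → ∀ t, F (ξ • A) t = F A (ξ * t) := by
    intro ξ hξ t
    rw [F, F, smul_finset_def, Finset.sum_image
      (fun a _ b _ h => by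
        simpa using mul_left_cancel₀ hξ (by simpa [smul_eq_mul] using h))]
    refine sum_congr rfl fun a _ => ?_
    rw [smul_eq_mul]
    ring_nf
  have hcard_smul : ∀ ξ : ZMod p, ξ ≠ 0 → (ξ • A).card = A.card := by
    intro ξ hξ
    rw [smul_finset_def]
    exact Finset.card_image_of_injective _ (MulAction.injective₀ hξ)
  have hE : ∀ ξ ∈ S, P * (E[A, ξ • A] : ℝ) = ∑ t : ZMod p, n t * n (ξ * t) := by
    intro ξ hξ
    rw [hP, energy_r A (ξ • A)]
    exact sum_congr rfl fun t _ => by rw [hFsmul ξ (hS0 ξ hξ) t]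
  have hinner : ∀ t : ZMod p, t ≠ 0 → ∑ ξ ∈ S, n (ξ * t) ≤ P * K := by
    intro t ht
    rw [← hpar]
    rw [show (∑ ξ ∈ S, n (ξ * t)) = ∑ u ∈ S.image (· * t), n u from
      (Finset.sum_image (fun a _ b _ h => mul_right_cancel₀ ht h)).symm]
    exact Finset.sum_le_sum_of_subset_of_nonneg (subset_univ _) (fun i _ _ => hnn i)
  have hsum : ∑ ξ ∈ S, (P * (E[A, ξ • A] : ℝ)) ≤ s * K ^ 4 + P ^ 2 * K ^ 2 := by
    calc ∑ ξ ∈ S, (P * (E[A, ξ • A] : ℝ)) = ∑ ξ ∈ S, ∑ t : ZMod p, n t * n (ξ * t) :=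
          sum_congr rfl hE
      _ = ∑ t : ZMod p, n t * ∑ ξ ∈ S, n (ξ * t) := by
          rw [Finset.sum_comm]
          exact sum_congr rfl fun t _ => (mul_sum _ _ _).symm
      _ = n 0 * (∑ ξ ∈ S, n (ξ * 0)) + ∑ t ∈ univ.erase 0, n t * ∑ ξ ∈ S, n (ξ * t) :=
          (Finset.add_sum_erase _ _ (mem_univ 0)).symm
      _ ≤ s * K ^ 4 + P ^ 2 * K ^ 2 := by
          have h1 : n 0 * (∑ ξ ∈ S, n (ξ * 0)) = s * K ^ 4 := by
            simp only [mul_zero, hn0, sum_const, nsmul_eq_mul, ← hs]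
            ring
          have h2 : ∑ t ∈ univ.erase 0, n t * ∑ ξ ∈ S, n (ξ * t) ≤ P ^ 2 * K ^ 2 := by
            calc ∑ t ∈ univ.erase 0, n t * ∑ ξ ∈ S, n (ξ * t)
                ≤ ∑ t ∈ univ.erase 0, n t * (P * K) := by
                  refine sum_le_sum fun t ht => ?_
                  exact mul_le_mul_of_nonneg_left (hinner t (Finset.ne_of_mem_erase ht)) (hnn t)
              _ ≤ (∑ t : ZMod p, n t) * (P * K) := by
                  rw [← Finset.sum_mul]
                  refine mul_le_mul_of_nonneg_right ?_ (by positivity)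
                  exact Finset.sum_le_sum_of_subset_of_nonneg
                    (fun x _ => mem_univ x) (fun i _ _ => hnn i)
              _ = P ^ 2 * K ^ 2 := by rw [hpar]; ring
          linarith
  have hconst : ∑ _ξ ∈ S, ((s * K ^ 4 + P ^ 2 * K ^ 2) / s) = s * K ^ 4 + P ^ 2 * K ^ 2 := by
    rw [sum_const, nsmul_eq_mul, ← hs, mul_div_cancel₀ _ hspos.ne']
  have hsum2 : ∑ ξ ∈ S, (P * (E[A, ξ • A] : ℝ))
      ≤ ∑ _ξ ∈ S, ((s * K ^ 4 + P ^ 2 * K ^ 2) / s) := by rw [hconst]; exact hsum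
  obtain ⟨ξ, hξS, hξ⟩ := Finset.exists_le_of_sum_le hS hsum2
  refine ⟨ξ, hξS, ?_⟩
  set X : ℝ := 1 / P + P / (s * K ^ 2) with hX
  have hXpos : 0 < X := by
    rw [hX]
    have := mul_pos hspos (pow_pos hKpos 2)
    positivity
  set c : ℝ := ((A + ξ • A).card : ℝ) with hc
  set e : ℝ := (E[A, ξ • A] : ℝ) with he
  have hcnn : 0 ≤ c := by rw [hc]; positivity
  have hcs : K ^ 2 * K ^ 2 ≤ c * e := by
    have := Finset.le_card_add_mul_addEnergy A (ξ • A)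
    rw [hK, hc, he]
    have hcard : ((ξ • A).card : ℝ) = (A.card : ℝ) := by
      exact_mod_cast hcard_smul ξ (hS0 ξ hξS)
    calc ((A.card : ℝ)) ^ 2 * ((A.card : ℝ)) ^ 2
        = ((A.card : ℝ)) ^ 2 * ((ξ • A).card : ℝ) ^ 2 := by rw [hcard]
      _ ≤ ((A + ξ • A).card : ℝ) * (E[A, ξ • A] : ℝ) := by exact_mod_cast this
  have heX : e ≤ K ^ 4 * X := by
    have h7 : P * e ≤ (s * K ^ 4 + P ^ 2 * K ^ 2) / s := hξ
    have h8 : (s * K ^ 4 + P ^ 2 * K ^ 2) / s / P = K ^ 4 * X := by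
      rw [hX]
      field_simp
    rw [← h8, le_div_iff₀ hPpos, mul_comm]
    exact h7
  have hepos : 0 < e := by
    rw [he]
    exact_mod_cast Finset.addEnergy_pos hA (hA.smul_finset : (ξ • A).Nonempty)
  have hcs4 : K ^ 4 ≤ c * e := by
    have hr : K ^ 2 * K ^ 2 = K ^ 4 := by ring
    linarith [hcs]
  have h10 : K ^ 4 ≤ c * (K ^ 4 * X) := le_trans hcs4 (mul_le_mul_of_nonneg_left heX hcnn)
  have h11 : 1 ≤ c * X := by
    have hK4 : (0 : ℝ) < K ^ 4 := pow_pos hKpos 4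
    rw [← mul_le_mul_iff_of_pos_right hK4]
    calc 1 * K ^ 4 = K ^ 4 := one_mul _
      _ ≤ c * (K ^ 4 * X) := h10
      _ = c * X * K ^ 4 := by ring
  rw [ge_iff_le, inv_eq_one_div, div_le_iff₀ hXpos]
  exact h11
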